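/- arXiv:math/0702128 — 3 statements merged into one kernel-verified Lean document; each statement's English description precedes it below -/
import Mathlib

section
/- Let 𝔉₂ be the completed free Lie algebra over a field k of characteristic 0 on generators X, Y. If R = R(X,Y) ∈ 𝔉₂ satisfies R(2X, Y) = 2·R(X,Y) (where R(2X,Y) denotes the image of R under the continuous Lie algebra endomorphism sending X ↦ 2X, Y ↦ Y), then R is of the form R = Σ_{m≥1} a_m (ad Y)^{m-1}(X) for some scalars a_m ∈ k. -/
open scoped BigOperators

/-- Words in the letters `X = 0`, `Y = 1`, ... -/
abbrev Word (n : ℕ) := List (Fin n)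

/-- Coefficient families of non-commutative formal power series `k⟨⟨X₁,…,Xₙ⟩⟩`:
a series is recorded by its coefficient at each word. -/
abbrev NC (k : Type*) (n : ℕ) := Word n → k

/-- The list of shuffles (with multiplicity) of two words. -/
def shuffle {α : Type*} : List α → List α → List (List α)
  | [], v => [v]
  | u, [] => [u]
  | a :: u, b :: v =>
      ((shuffle u (b :: v)).map (a :: ·)) ++ ((shuffle (a :: u) v).map (b :: ·))
  termination_by u v => u.length + v.length
  decreasing_by all_goals simp +arith +decide

variable {k : Type*}

/-- `φ` is group-like for the coproduct with `X`, `Y` primitive: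
`Δφ = φ ⊗ φ` and constant term 1, expressed coefficientwise via shuffles. -/
def IsGroupLike [CommRing k] (φ : NC k 2) : Prop :=
  φ [] = 1 ∧ ∀ u v : Word 2, φ u * φ v = ((shuffle u v).map φ).sum

/-- `φ` is Lie-like (primitive): `Δφ = φ⊗1 + 1⊗φ`, coefficientwise. -/
def IsLieLike [CommRing k] (φ : NC k 2) : Prop :=
  φ [] = 0 ∧ ∀ u v : Word 2, u ≠ [] → v ≠ [] → ((shuffle u v).map φ).sum = 0

/-- commutator group-like: group-like with vanishing coefficients of `X` and `Y`. -/
def IsCommGroupLike [CommRing k] (φ : NC k 2) : Prop :=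
  IsGroupLike φ ∧ φ [0] = 0 ∧ φ [1] = 0

/-- A degree-one element `a·T` of `A[[T]]`, modelling a degree-1 element of a
completed graded algebra. -/
noncomputable def lin {A : Type*} [Ring A] (a : A) : PowerSeries A :=
  PowerSeries.mk fun n => if n = 1 then a else 0

/-- Substitution `φ(X₁, X₂)` of a non-commutative power series `φ` at two
elements (of positive valuation) of a completed graded algebra, where the
completion is modelled by `A[[T]]` (degree `n` part = coefficient of `Tⁿ`). -/
noncomputable def substPS [CommRing k] {A : Type*} [Ring A] [Algebra k A]
    (φ : NC k 2) (P Q : PowerSeries A) : PowerSeries A :=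
  PowerSeries.mk fun n =>
    ∑ m ∈ Finset.range (n + 1), ∑ u : Fin m → Fin 2,
      φ (List.ofFn u) • PowerSeries.coeff n (((List.ofFn u).map ![P, Q]).prod)

/-- Exponential of a power series (meaningful when the constant term vanishes). -/
noncomputable def expPS (k : Type*) [Field k] {A : Type*} [Ring A] [Algebra k A]
    (s : PowerSeries A) : PowerSeries A :=
  PowerSeries.mk fun n =>
    ∑ m ∈ Finset.range (n + 1), (Nat.factorial m : k)⁻¹ • PowerSeries.coeff n (s ^ m)

/-- Coefficients of the multiplicative inverse of a power series with
constant term `1`. -/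
noncomputable def invCoeff {A : Type*} [Ring A] (s : PowerSeries A) : ℕ → A
  | 0 => 1
  | n + 1 => -∑ j : Fin (n + 1), invCoeff s j.1 * PowerSeries.coeff (n + 1 - j.1) s
  termination_by n => n
  decreasing_by exact j.2

/-- Inverse of a power series with constant term `1`. -/
noncomputable def PSInv {A : Type*} [Ring A] (s : PowerSeries A) : PowerSeries A :=
  PowerSeries.mk (invCoeff s)

/-- Relations presenting (the enveloping algebra of) the pure sphere braid Lie
algebra `𝔓₅` on 5 strings. -/
inductive P5Rel (k : Type*) [CommRing k] :
    FreeAlgebra k (Fin 5 × Fin 5) → FreeAlgebra k (Fin 5 × Fin 5) → Prop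
  | diag (i : Fin 5) : P5Rel k (FreeAlgebra.ι k (i, i)) 0
  | symm (i j : Fin 5) : P5Rel k (FreeAlgebra.ι k (i, j)) (FreeAlgebra.ι k (j, i))
  | rowsum (i : Fin 5) : P5Rel k (∑ j : Fin 5, FreeAlgebra.ι k (i, j)) 0
  | disj (i j l m : Fin 5) (h : i ≠ l ∧ i ≠ m ∧ j ≠ l ∧ j ≠ m) :
      P5Rel k (FreeAlgebra.ι k (i, j) * FreeAlgebra.ι k (l, m))
              (FreeAlgebra.ι k (l, m) * FreeAlgebra.ι k (i, j))

/-- The (graded) enveloping algebra `U𝔓₅` of the pure sphere braid Lie algebra. -/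
abbrev P5A (k : Type*) [CommRing k] := RingQuot (P5Rel k)

/-- The generator `X_{ij}` of `U𝔓₅`. -/
noncomputable def Xg (k : Type*) [CommRing k] (i j : Fin 5) : P5A k :=
  RingQuot.mkAlgHom k (P5Rel k) (FreeAlgebra.ι k (i, j))

/-- Relations presenting (the enveloping algebra of) the infinitesimal braid
("chord diagram") Lie algebra `𝔞ₙ`. -/
inductive ARel (k : Type*) [CommRing k] (n : ℕ) :
    FreeAlgebra k (Fin n × Fin n) → FreeAlgebra k (Fin n × Fin n) → Prop
  | diag (i : Fin n) : ARel k n (FreeAlgebra.ι k (i, i)) 0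
  | symm (i j : Fin n) : ARel k n (FreeAlgebra.ι k (i, j)) (FreeAlgebra.ι k (j, i))
  | comm3 (i j l : Fin n) (h : i ≠ j ∧ i ≠ l ∧ j ≠ l) :
      ARel k n (FreeAlgebra.ι k (i, j) * (FreeAlgebra.ι k (i, l) + FreeAlgebra.ι k (j, l)))
               ((FreeAlgebra.ι k (i, l) + FreeAlgebra.ι k (j, l)) * FreeAlgebra.ι k (i, j))
  | comm4 (i j l m : Fin n)
      (h : i ≠ j ∧ i ≠ l ∧ i ≠ m ∧ j ≠ l ∧ j ≠ m ∧ l ≠ m) :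
      ARel k n (FreeAlgebra.ι k (i, j) * FreeAlgebra.ι k (l, m))
               (FreeAlgebra.ι k (l, m) * FreeAlgebra.ι k (i, j))

/-- The (graded) enveloping algebra `U𝔞ₙ`. -/
abbrev AA (k : Type*) [CommRing k] (n : ℕ) := RingQuot (ARel k n)

/-- The generator `t_{ij}` of `U𝔞ₙ`. -/
noncomputable def tg (k : Type*) [CommRing k] (n : ℕ) (i j : Fin n) : AA k n :=
  RingQuot.mkAlgHom k (ARel k n) (FreeAlgebra.ι k (i, j))

/-- The series `X` (i.e. the image of the first generator) in the model
`(FreeAlgebra k (Fin 2))[[T]]` of `k⟨⟨X,Y⟩⟩`. -/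
noncomputable def XF (k : Type*) [CommRing k] : PowerSeries (FreeAlgebra k (Fin 2)) :=
  lin (FreeAlgebra.ι k (0 : Fin 2))

/-- The series `Y`. -/
noncomputable def YF (k : Type*) [CommRing k] : PowerSeries (FreeAlgebra k (Fin 2)) :=
  lin (FreeAlgebra.ι k (1 : Fin 2))

/-- The series `Z = -X-Y`. -/
noncomputable def ZF (k : Type*) [CommRing k] : PowerSeries (FreeAlgebra k (Fin 2)) :=
  -XF k - YF k

/-- `φ(X_{ab}, X_{bc})` in the completed `U𝔓₅`. -/
noncomputable def S5 (k : Type*) [Field k] (φ : NC k 2) (a b c : Fin 5) :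
    PowerSeries (P5A k) :=
  substPS φ (lin (Xg k a b)) (lin (Xg k b c))

/-- The multiplicative 5-cycle relation
`φ(X₁₂,X₂₃)φ(X₃₄,X₄₅)φ(X₅₁,X₁₂)φ(X₂₃,X₃₄)φ(X₄₅,X₅₁) = 1` in the completed `U𝔓₅`. -/
def FiveCycleMul (k : Type*) [Field k] (φ : NC k 2) : Prop :=
  S5 k φ 0 1 2 * S5 k φ 2 3 4 * S5 k φ 4 0 1 * S5 k φ 1 2 3 * S5 k φ 3 4 0 = 1

/-- `t_{ij}` as a degree-one element of the completed `U𝔞₄`. -/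
noncomputable def lt (k : Type*) [Field k] (i j : Fin 4) : PowerSeries (AA k 4) :=
  lin (tg k 4 i j)

/-- Drinfel'd's pentagon equation
`φ(t₁₂,t₂₃+t₂₄)φ(t₁₃+t₂₃,t₃₄) = φ(t₂₃,t₃₄)φ(t₁₂+t₁₃,t₂₄+t₃₄)φ(t₁₂,t₂₃)`
in the completed `U𝔞₄` (strings are `0,1,2,3`). -/
def Pentagon (k : Type*) [Field k] (φ : NC k 2) : Prop :=
  substPS φ (lt k 0 1) (lt k 1 2 + lt k 1 3) * substPS φ (lt k 0 2 + lt k 1 2) (lt k 2 3) =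
    substPS φ (lt k 1 2) (lt k 2 3) *
      substPS φ (lt k 0 1 + lt k 0 2) (lt k 1 3 + lt k 2 3) * substPS φ (lt k 0 1) (lt k 1 2)

/-- The 2-cycle relation `φ(X,Y)φ(Y,X) = 1` in `k⟨⟨X,Y⟩⟩`. -/
def TwoCycleMul (k : Type*) [Field k] (φ : NC k 2) : Prop :=
  substPS φ (XF k) (YF k) * substPS φ (YF k) (XF k) = 1

/-- The 3-cycle relation
`e^{μX/2}φ(Z,X)e^{μZ/2}φ(Y,Z)e^{μY/2}φ(X,Y) = 1`, `Z = -X-Y`, in `k⟨⟨X,Y⟩⟩`. -/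
def ThreeCycleMul (k : Type*) [Field k] (μ : k) (φ : NC k 2) : Prop :=
  expPS k ((μ / 2) • XF k) * substPS φ (ZF k) (XF k) * expPS k ((μ / 2) • ZF k) *
      substPS φ (YF k) (ZF k) * expPS k ((μ / 2) • YF k) * substPS φ (XF k) (YF k) = 1

/-- The special 3-cycle relation `φ(Z,X)φ(Y,Z)φ(X,Y) = 1`, `Z = -X-Y`. -/
def Special3 (k : Type*) [Field k] (φ : NC k 2) : Prop :=
  substPS φ (ZF k) (XF k) * substPS φ (YF k) (ZF k) * substPS φ (XF k) (YF k) = 1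

/-- Drinfel'd's first hexagon equation, for elements `a = t₁₂`, `b = t₁₃`, `c = t₂₃`:
`exp(μ(t₁₃+t₂₃)/2) = φ(t₁₃,t₁₂)exp(μt₁₃/2)φ(t₁₃,t₂₃)⁻¹exp(μt₂₃/2)φ(t₁₂,t₂₃)`. -/
def Hex1 (k : Type*) [Field k] {A : Type*} [Ring A] [Algebra k A]
    (μ : k) (φ : NC k 2) (a b c : A) : Prop :=
  expPS k ((μ / 2) • (lin b + lin c)) =
    substPS φ (lin b) (lin a) * expPS k ((μ / 2) • lin b) * PSInv (substPS φ (lin b) (lin c)) *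
      expPS k ((μ / 2) • lin c) * substPS φ (lin a) (lin c)

/-- Drinfel'd's second hexagon equation, for elements `a = t₁₂`, `b = t₁₃`, `c = t₂₃`:
`exp(μ(t₁₂+t₁₃)/2) = φ(t₂₃,t₁₃)⁻¹exp(μt₁₃/2)φ(t₁₂,t₁₃)exp(μt₁₂/2)φ(t₁₂,t₂₃)⁻¹`. -/
def Hex2 (k : Type*) [Field k] {A : Type*} [Ring A] [Algebra k A]
    (μ : k) (φ : NC k 2) (a b c : A) : Prop :=
  expPS k ((μ / 2) • (lin a + lin b)) =
    PSInv (substPS φ (lin c) (lin b)) * expPS k ((μ / 2) • lin b) * substPS φ (lin a) (lin b) *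
      expPS k ((μ / 2) • lin a) * PSInv (substPS φ (lin a) (lin c))

/-- `(ad Y)^m (X)` in the model of `k⟨⟨X,Y⟩⟩`. -/
noncomputable def adYiter (k : Type*) [CommRing k] (m : ℕ) :
    PowerSeries (FreeAlgebra k (Fin 2)) :=
  (fun z => YF k * z - z * YF k)^[m] (XF k)


section Aux

open PowerSeries

variable (k : Type*) [Field k] [CharZero k]

private lemma mono_mul {A : Type*} [Semiring A] (m n : ℕ) (a b : A) :
    PowerSeries.monomial m a * PowerSeries.monomial n b
      = PowerSeries.monomial (m + n) (a * b) := by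
  have h := MvPowerSeries.monomial_mul_monomial (R := A)
    (Finsupp.single () m) (Finsupp.single () n) a b
  rw [← Finsupp.single_add] at h
  exact h

private lemma lin_eq_monomial {A : Type*} [Ring A] (a : A) :
    lin a = PowerSeries.monomial 1 a := by
  ext n
  rw [lin, PowerSeries.coeff_mk, PowerSeries.coeff_monomial]

/-- `x` and `y`, abbreviations. -/
private noncomputable abbrev xg' : FreeAlgebra k (Fin 2) := FreeAlgebra.ι k 0
private noncomputable abbrev yg' : FreeAlgebra k (Fin 2) := FreeAlgebra.ι k 1

/-- `(ad y)^m x` in the free algebra. -/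
private noncomputable def adw (m : ℕ) : FreeAlgebra k (Fin 2) :=
  (fun z => yg' k * z - z * yg' k)^[m] (xg' k)

private lemma adYiter_eq (m : ℕ) :
    adYiter k m = PowerSeries.monomial (m + 1) (adw k m) := by
  induction m with
  | zero =>
      simp only [adYiter, Function.iterate_zero, id_eq, adw, XF]
      exact lin_eq_monomial _
  | succ m ih =>
      have h1 : adYiter k (m + 1)
          = YF k * adYiter k m - adYiter k m * YF k := by
        rw [adYiter, Function.iterate_succ_apply', ← adYiter]
      have h2 : adw k (m + 1) = yg' k * adw k m - adw k m * yg' k := by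
        rw [adw, Function.iterate_succ_apply', ← adw]
      rw [h1, ih, h2, YF, lin_eq_monomial, mono_mul, mono_mul, map_sub,
        show (1 : ℕ) + (m + 1) = m + 1 + 1 from Nat.add_comm 1 (m + 1)]

/-- the word `Y^p X Y^q`. -/
private def wlist (p q : ℕ) : Word 2 :=
  List.replicate p 1 ++ 0 :: List.replicate q 1

private lemma wlist_length (p q : ℕ) : (wlist p q).length = p + q + 1 := by
  simp [wlist]; omega

private lemma wprod (p q : ℕ) :
    ((wlist p q).map (FreeAlgebra.ι k)).prod = yg' k ^ p * xg' k * yg' k ^ q := by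
  simp [wlist, mul_assoc]

/-- shuffles with a single letter are insertions. -/
private lemma shuffle_single {α : Type*} (a : α) (w : List α) :
    shuffle [a] w = (List.range (w.length + 1)).map (fun i => w.insertIdx i a) := by
  induction w with
  | nil => simp [shuffle, List.range_succ]
  | cons b v ih =>
      have h0 : shuffle ([] : List α) (b :: v) = [b :: v] := by simp [shuffle]
      rw [shuffle, h0, ih, List.length_cons]
      conv_rhs => rw [List.range_succ_eq_map]
      simp only [List.map_cons, List.map_nil, List.map_map, List.insertIdx_zero,
        List.singleton_append, Function.comp_def, List.insertIdx_succ_cons,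
        Nat.succ_eq_add_one]

private lemma insertIdx_replicate_append {α : Type*} (a : α) (l : List α) :
    ∀ p i, i ≤ p →
      (List.replicate p a ++ l).insertIdx i a = List.replicate (p + 1) a ++ l := by
  intro p
  induction p generalizing l with
  | zero =>
      intro i hi
      interval_cases i
      simp
  | succ p ih =>
      intro i hi
      cases i with
      | zero =>
          rw [List.insertIdx_zero, List.replicate_succ (a := a) (n := p + 1), List.cons_append]
      | succ i =>
          rw [List.replicate_succ, List.cons_append, List.insertIdx_succ_cons,
            ih l i (by omega)]
          rfl

private lemma insertIdx_wlist_left (p q i : ℕ) (hi : i ≤ p) :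
    (wlist p q).insertIdx i 1 = wlist (p + 1) q := by
  exact insertIdx_replicate_append 1 _ p i hi

private lemma insertIdx_wlist_right (p q i : ℕ) (hi : p < i) (hi2 : i ≤ p + q + 1) :
    (wlist p q).insertIdx i 1 = wlist p (q + 1) := by
  induction p generalizing i with
  | zero =>
      obtain ⟨j, rfl⟩ : ∃ j, i = j + 1 := ⟨i - 1, by omega⟩
      simp only [wlist, List.replicate_zero, List.nil_append, List.insertIdx_succ_cons]
      have := insertIdx_replicate_append (1 : Fin 2) [] q j (by omega)
      simpa using this
  | succ p ih =>
      obtain ⟨j, rfl⟩ : ∃ j, i = j + 1 := ⟨i - 1, by omega⟩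
      simp only [wlist, List.replicate_succ, List.cons_append, List.insertIdx_succ_cons]
      have := ih j (by omega) (by omega)
      simp only [wlist] at this
      rw [this]
      rfl

private lemma list_range_sum {M : Type*} [AddCommMonoid M] (f : ℕ → M) (n : ℕ) :
    ((List.range n).map f).sum = ∑ i ∈ Finset.range n, f i := by
  induction n with
  | zero => simp
  | succ n ih => rw [List.range_succ, Finset.sum_range_succ, List.map_append, List.sum_append, ih]; simp

/-- the key shuffle recurrence. -/
private lemma shuf_rec (R : NC k 2) (hR : IsLieLike R) (p q : ℕ) :
    ((p : k) + 1) * R (wlist (p + 1) q) + ((q : k) + 1) * R (wlist p (q + 1)) = 0 := by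
  have h := hR.2 [1] (wlist p q) (by simp) (by simp [wlist])
  rw [shuffle_single, List.map_map, list_range_sum, wlist_length] at h
  have hsplit : Finset.range (p + q + 1 + 1)
      = Finset.Ico 0 (p + 1) ∪ Finset.Ico (p + 1) (p + q + 2) := by
    rw [Finset.range_eq_Ico, Finset.Ico_union_Ico_eq_Ico (by omega) (by omega)]
  rw [hsplit, Finset.sum_union (Finset.Ico_disjoint_Ico_consecutive 0 (p + 1) (p + q + 2))] at h
  have h1 : ∑ i ∈ Finset.Ico 0 (p + 1), (R ∘ fun i => (wlist p q).insertIdx i 1) i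
      = (p + 1) • R (wlist (p + 1) q) := by
    have hc : ∀ i ∈ Finset.Ico 0 (p + 1),
        (R ∘ fun i => (wlist p q).insertIdx i 1) i = R (wlist (p + 1) q) := by
      intro i hi
      simp only [Finset.mem_Ico] at hi
      simp only [Function.comp_apply]
      rw [insertIdx_wlist_left p q i (by omega)]
    rw [Finset.sum_congr rfl hc, Finset.sum_const, Nat.card_Ico, Nat.sub_zero]
  have h2 : ∑ i ∈ Finset.Ico (p + 1) (p + q + 2), (R ∘ fun i => (wlist p q).insertIdx i 1) i
      = (q + 1) • R (wlist p (q + 1)) := by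
    have hc : ∀ i ∈ Finset.Ico (p + 1) (p + q + 2),
        (R ∘ fun i => (wlist p q).insertIdx i 1) i = R (wlist p (q + 1)) := by
      intro i hi
      simp only [Finset.mem_Ico] at hi
      simp only [Function.comp_apply]
      rw [insertIdx_wlist_right p q i (by omega) (by omega)]
    rw [Finset.sum_congr rfl hc, Finset.sum_const, Nat.card_Ico,
      show p + q + 2 - (p + 1) = q + 1 from by omega]
  rw [h1, h2, nsmul_eq_mul, nsmul_eq_mul] at h
  push_cast at h
  linear_combination h

/-- the coefficient function. -/
private def dcoef (m p : ℕ) : k := (-1 : k) ^ (m + p) * (m.choose p : k)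

/-- all coefficients of `R` on one-X words are determined by the top one. -/
private lemma coef_formula (R : NC k 2) (hR : IsLieLike R) :
    ∀ q p, R (wlist p q) = ((-1 : k) ^ q * ((p + q).choose q : k)) * R (wlist (p + q) 0) := by
  intro q
  induction q with
  | zero => intro p; simp
  | succ q ih =>
      intro p
      have hrec := shuf_rec k R hR p q
      have hq1 : ((q : k) + 1) ≠ 0 := by
        have h : ((q + 1 : ℕ) : k) ≠ 0 := Nat.cast_ne_zero.mpr (Nat.succ_ne_zero q)
        push_cast at h
        exact h
      have hIH := ih (p + 1)
      rw [show p + 1 + q = p + q + 1 from by omega] at hIH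
      have hchoose : (p + q + 1).choose (q + 1) * (q + 1) = (p + q + 1).choose q * (p + 1) := by
        have h := Nat.choose_succ_right_eq (p + q + 1) q
        rwa [show p + q + 1 - q = p + 1 from by omega] at h
      have hcast : (((p + q + 1).choose (q + 1) : k)) * ((q : k) + 1)
          = (((p + q + 1).choose q : k)) * ((p : k) + 1) := by
        exact_mod_cast congrArg (fun n : ℕ => (n : k)) hchoose
      rw [show p + (q + 1) = p + q + 1 from by omega]
      apply mul_left_cancel₀ hq1
      linear_combination hrec - ((p : k) + 1) * hIH
        + ((-1 : k) ^ q * R (wlist (p + q + 1) 0)) * hcast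

/-- words with exactly one `0` are of the form `wlist p q`. -/
private lemma single_zero_wlist : ∀ w : Word 2, w.count 0 = 1 → ∃ p q, w = wlist p q := by
  have fin2 : ∀ h : Fin 2, h ≠ 0 → h = 1 := by decide
  have all_one : ∀ t : Word 2, t.count 0 = 0 → t = List.replicate t.length 1 := by
    intro t
    induction t with
    | nil => simp
    | cons h t ih =>
        intro hc
        rw [List.count_cons] at hc
        simp only [beq_iff_eq] at hc
        have h1 : h ≠ 0 := by
          intro hh
          rw [if_pos hh] at hc
          omega
        rw [if_neg h1] at hc
        rw [fin2 h h1, ih (by omega)]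
        simp [List.replicate_succ]
  intro w
  induction w with
  | nil => simp
  | cons h t ih =>
      intro hc
      rw [List.count_cons] at hc
      simp only [beq_iff_eq] at hc
      by_cases h0 : h = 0
      · rw [if_pos h0] at hc
        have ht : t.count 0 = 0 := by omega
        refine ⟨0, t.length, ?_⟩
        rw [h0, all_one t ht]
        simp [wlist]
      · rw [if_neg h0] at hc
        obtain ⟨p, q, hpq⟩ := ih (by omega)
        refine ⟨p + 1, q, ?_⟩
        rw [fin2 h h0, hpq]
        rfl

/-- support: nonzero coefficients occur only on one-X words. -/
private lemma support_lemma (R : NC k 2)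
    (hdil : ∀ w : Word 2, (2 : k) ^ (w.count (0 : Fin 2)) * R w = 2 * R w)
    (w : Word 2) (hw : R w ≠ 0) : w.count 0 = 1 := by
  have h2 : (2 : k) ^ (w.count (0 : Fin 2)) = 2 := mul_right_cancel₀ hw (hdil w)
  have h3 : ((2 ^ (w.count (0 : Fin 2)) : ℕ) : k) = ((2 ^ 1 : ℕ) : k) := by
    push_cast [pow_one]
    exact h2
  exact Nat.pow_right_injective (le_refl 2) (Nat.cast_injective h3)

/-- the indicator function of `p`. -/
private def efun {n : ℕ} (p : Fin n) : Fin n → Fin 2 := fun q => if q = p then 0 else 1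

private lemma efun_inj {n : ℕ} : Function.Injective (efun (n := n)) := by
  intro p p' h
  by_contra hne
  have h1 := congrFun h p'
  simp only [efun, if_pos rfl, if_neg (fun hc : p' = p => hne hc.symm)] at h1
  exact absurd h1 (by decide)

private lemma ofFn_efun : ∀ (n : ℕ) (p : Fin n),
    List.ofFn (efun p) = wlist p.1 (n - 1 - p.1) := by
  intro n
  induction n with
  | zero => exact fun p => absurd p.2 (by omega)
  | succ n ih =>
      intro p
      rcases Fin.eq_zero_or_eq_succ p with h0 | ⟨q, rfl⟩
      · subst h0
        rw [List.ofFn_succ]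
        have h1 : efun (0 : Fin (n+1)) 0 = 0 := by simp [efun]
        have h2 : (fun i : Fin n => efun (0 : Fin (n+1)) i.succ) = fun _ : Fin n => 1 := by
          funext q; simp [efun, Fin.succ_ne_zero]
        rw [h1, h2]
        simp [wlist, List.ofFn_const]
      · rw [List.ofFn_succ]
        have h1 : efun q.succ (0 : Fin (n+1)) = 1 := by
          simp [efun, (Fin.succ_ne_zero q).symm]
        have h2 : (fun i : Fin n => efun q.succ i.succ) = efun q := by
          funext r; simp [efun, Fin.succ_inj]
        rw [h1, h2, ih q]
        simp only [wlist, Fin.val_succ, List.replicate_succ]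
        have : n + 1 - 1 - (q.1 + 1) = n - 1 - q.1 := by omega
        rw [this]
        rfl

/-- expansion of `(ad y)^m x` over words. -/
private lemma adw_expand (m : ℕ) :
    adw k m = ∑ p ∈ Finset.range (m + 1), dcoef k m p • (yg' k ^ p * xg' k * yg' k ^ (m - p)) := by
  induction m with
  | zero => simp [adw, dcoef]
  | succ m ih =>
      have h2 : adw k (m + 1) = yg' k * adw k m - adw k m * yg' k := by
        rw [adw, Function.iterate_succ_apply', ← adw]
      rw [h2, ih, Finset.mul_sum, Finset.sum_mul]
      have hL : ∀ p ∈ Finset.range (m + 1),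
          yg' k * (dcoef k m p • (yg' k ^ p * xg' k * yg' k ^ (m - p)))
            = dcoef k m p • (yg' k ^ (p + 1) * xg' k * yg' k ^ (m + 1 - (p + 1))) := by
        intro p _
        rw [mul_smul_comm]
        congr 1
        rw [pow_succ']
        have h : m + 1 - (p + 1) = m - p := by omega
        rw [h]
        simp [mul_assoc]
      have hR : ∀ p ∈ Finset.range (m + 1),
          (dcoef k m p • (yg' k ^ p * xg' k * yg' k ^ (m - p))) * yg' k
            = dcoef k m p • (yg' k ^ p * xg' k * yg' k ^ (m + 1 - p)) := by
        intro p hp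
        rw [smul_mul_assoc]
        congr 1
        rw [Finset.mem_range] at hp
        have h : m + 1 - p = (m - p) + 1 := by omega
        rw [h, pow_succ]
        simp [mul_assoc]
      rw [Finset.sum_congr rfl hL, Finset.sum_congr rfl hR]
      set T : ℕ → FreeAlgebra k (Fin 2) := fun j => yg' k ^ j * xg' k * yg' k ^ (m + 1 - j) with hT
      have hpascal : ∀ i, dcoef k (m + 1) (i + 1) = dcoef k m i - dcoef k m (i + 1) := by
        intro i
        simp only [dcoef, Nat.choose_succ_succ]
        push_cast
        have : (-1 : k) ^ (m + 1 + (i + 1)) = (-1 : k) ^ (m + i) := by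
          have : m + 1 + (i + 1) = (m + i) + 2 := by omega
          rw [this, pow_add]; norm_num
        rw [this]
        have h1 : (-1 : k) ^ (m + (i + 1)) = -(-1 : k) ^ (m + i) := by
          have : m + (i + 1) = (m + i) + 1 := by omega
          rw [this, pow_succ]; ring
        rw [h1]
        ring
      have hzero : dcoef k (m + 1) 0 = -(dcoef k m 0) := by
        simp only [dcoef, Nat.choose_zero_right]
        have : (-1 : k) ^ (m + 1 + 0) = -(-1 : k) ^ (m + 0) := by
          rw [add_zero, add_zero, pow_succ]; ring
        rw [this]; ring
      -- extend the right sum to range (m+2)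
      have hext : ∑ p ∈ Finset.range (m + 1), dcoef k m p • T p
          = ∑ p ∈ Finset.range (m + 2), dcoef k m p • T p := by
        rw [Finset.sum_range_succ (n := m + 1)]
        have : dcoef k m (m + 1) = 0 := by
          simp [dcoef, Nat.choose_succ_self]
        rw [this, zero_smul, add_zero]
      rw [hext]
      rw [Finset.sum_range_succ' (fun j => dcoef k (m + 1) j • T j) (m + 1)]
      rw [Finset.sum_range_succ' (fun j => dcoef k m j • T j) (m + 1)]
      have hterm : ∀ i, dcoef k (m + 1) (i + 1) • T (i + 1)
          = dcoef k m i • T (i + 1) - dcoef k m (i + 1) • T (i + 1) := by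
        intro i
        rw [hpascal i, sub_smul]
      rw [Finset.sum_congr rfl (fun i _ => hterm i)]
      rw [Finset.sum_sub_distrib]
      rw [hzero, neg_smul]
      abel

/-- coefficient of `substPS R (XF k) (YF k)` at `n`. -/
private lemma subst_coeff (R : NC k 2) (n : ℕ) :
    PowerSeries.coeff n (substPS R (XF k) (YF k))
      = ∑ u : Fin n → Fin 2, R (List.ofFn u) • ((List.ofFn u).map (FreeAlgebra.ι k)).prod := by
  rw [substPS, PowerSeries.coeff_mk]
  have hMat : ∀ i : Fin 2, (![XF k, YF k]) i = PowerSeries.monomial 1 (FreeAlgebra.ι k i) := by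
    intro i
    match i with
    | 0 => rw [Matrix.cons_val_zero, XF, lin_eq_monomial]
    | 1 => rw [Matrix.cons_val_one, Matrix.cons_val_zero, YF, lin_eq_monomial]
  have hprod : ∀ l : List (Fin 2),
      (l.map ![XF k, YF k]).prod
        = PowerSeries.monomial l.length ((l.map (FreeAlgebra.ι k)).prod) := by
    intro l
    induction l with
    | nil => simp [PowerSeries.monomial_zero_eq_C_apply]
    | cons a l ih =>
        rw [List.map_cons, List.prod_cons, ih, hMat a, mono_mul, List.length_cons,
          Nat.add_comm 1 l.length, List.map_cons, List.prod_cons]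
  have hterm : ∀ m : ℕ, (∑ u : Fin m → Fin 2,
        R (List.ofFn u) • PowerSeries.coeff n (((List.ofFn u).map ![XF k, YF k]).prod))
      = if n = m then ∑ u : Fin m → Fin 2,
          R (List.ofFn u) • ((List.ofFn u).map (FreeAlgebra.ι k)).prod else 0 := by
    intro m
    by_cases h : n = m
    · rw [if_pos h]
      apply Finset.sum_congr rfl
      intro u _
      rw [hprod, PowerSeries.coeff_monomial, List.length_ofFn, if_pos h]
    · rw [if_neg h]
      apply Finset.sum_eq_zero
      intro u _
      rw [hprod, PowerSeries.coeff_monomial, List.length_ofFn, if_neg h, smul_zero]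
  rw [Finset.sum_congr rfl (fun m _ => hterm m)]
  rw [Finset.sum_ite_eq (Finset.range (n + 1)) n]
  rw [if_pos (Finset.self_mem_range_succ n)]

end Aux

/-- If a Lie series `R = R(X,Y)` in the completed free Lie algebra on `X`, `Y`
satisfies `R(2X,Y) = 2·R(X,Y)`, then `R = Σ_{m≥1} a_m (ad Y)^{m-1}(X)` for some
scalars `a_m ∈ k`.  (The coefficient of a word `w` in `R(2X,Y)` is
`2^{#occurrences of X in w}` times that of `R`; the degree-`n` part of the
conclusion's right-hand side is `a_n • (ad Y)^{n-1}(X)`.) -/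
theorem statement1 (k : Type*) [Field k] [CharZero k] (R : NC k 2)
    (hR : IsLieLike R)
    (hdil : ∀ w : Word 2, (2 : k) ^ (w.count (0 : Fin 2)) * R w = 2 * R w) :
    ∃ a : ℕ → k, ∀ n : ℕ,
      PowerSeries.coeff n (substPS R (XF k) (YF k)) =
        a n • PowerSeries.coeff n (adYiter k (n - 1)) := by
  refine ⟨fun n => R (wlist (n - 1) 0), fun n => ?_⟩
  rw [subst_coeff k R n]
  cases n with
  | zero =>
      rw [adYiter_eq]
      have h0 : ∀ u : Fin 0 → Fin 2, R (List.ofFn u) = 0 := by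
        intro u
        have : List.ofFn u = [] := by simp
        rw [this, hR.1]
      rw [Finset.sum_congr rfl (fun u _ => by rw [h0 u, zero_smul])]
      rw [Finset.sum_const_zero]
      rw [PowerSeries.coeff_monomial]
      norm_num
  | succ m =>
      have hsub : m + 1 - 1 = m := rfl
      rw [hsub, adYiter_eq, PowerSeries.coeff_monomial, if_pos rfl]
      set F : (Fin (m + 1) → Fin 2) → FreeAlgebra k (Fin 2) :=
        fun u => R (List.ofFn u) • ((List.ofFn u).map (FreeAlgebra.ι k)).prod with hF
      have hclaim : ∀ u : Fin (m + 1) → Fin 2,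
          F u = ∑ p : Fin (m + 1), if u = efun p then F (efun p) else 0 := by
        intro u
        by_cases hex : ∃ p : Fin (m + 1), u = efun p
        · obtain ⟨p0, rfl⟩ := hex
          rw [Finset.sum_eq_single p0]
          · rw [if_pos rfl]
          · intro p _ hne
            rw [if_neg]
            intro hc
            exact hne (efun_inj hc).symm
          · intro hc
            exact absurd (Finset.mem_univ p0) hc
        · have hzero : R (List.ofFn u) = 0 := by
            by_contra hne
            have hc := support_lemma k R hdil _ hne
            obtain ⟨p, q, hpq⟩ := single_zero_wlist _ hc
            have hlen : m + 1 = p + q + 1 := by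
              have := congrArg List.length hpq
              rwa [List.length_ofFn, wlist_length] at this
            have hple : p < m + 1 := by omega
            have hq : q = m + 1 - 1 - p := by omega
            have : List.ofFn u = List.ofFn (efun (⟨p, hple⟩ : Fin (m + 1))) := by
              rw [ofFn_efun, hpq, hq]
            exact hex ⟨⟨p, hple⟩, List.ofFn_injective this⟩
          have hF0 : F u = 0 := by rw [hF]; simp only; rw [hzero, zero_smul]
          rw [hF0]
          symm
          apply Finset.sum_eq_zero
          intro p _
          rw [if_neg (fun hc => hex ⟨p, hc⟩)]
      rw [Finset.sum_congr rfl (fun u _ => hclaim u), Finset.sum_comm]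
      rw [Finset.sum_congr rfl
        (fun p _ => Finset.sum_ite_eq' Finset.univ (efun p) (fun _ => F (efun p)))]
      rw [Finset.sum_congr rfl (fun p _ => if_pos (Finset.mem_univ (efun p)))]
      have hFe : ∀ p : Fin (m + 1),
          F (efun p) = (dcoef k m p.1 * R (wlist m 0)) •
            (yg' k ^ p.1 * xg' k * yg' k ^ (m - p.1)) := by
        intro p
        rw [hF]
        simp only
        rw [ofFn_efun]
        have hq : m + 1 - 1 - p.1 = m - p.1 := rfl
        rw [hq, wprod]
        have hple : p.1 ≤ m := by omega
        have hcf := coef_formula k R hR (m - p.1) p.1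
        have hpm : p.1 + (m - p.1) = m := by omega
        rw [hpm] at hcf
        rw [hcf]
        congr 1
        simp only [dcoef]
        rw [Nat.choose_symm hple]
        congr 1
        rw [show m + p.1 = (m - p.1) + 2 * p.1 from by omega, pow_add, pow_mul,
          neg_one_sq, one_pow, mul_one]
      rw [Finset.sum_congr rfl (fun p _ => hFe p)]
      have hsmul : ∀ p : Fin (m + 1),
          (dcoef k m p.1 * R (wlist m 0)) • (yg' k ^ p.1 * xg' k * yg' k ^ (m - p.1))
            = R (wlist m 0) • (dcoef k m p.1 • (yg' k ^ p.1 * xg' k * yg' k ^ (m - p.1))) := by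
        intro p
        rw [smul_smul, mul_comm]
      rw [Finset.sum_congr rfl (fun p _ => hsmul p), ← Finset.smul_sum]
      congr 1
      rw [Fin.sum_univ_eq_sum_range (fun p => dcoef k m p • (yg' k ^ p * xg' k * yg' k ^ (m - p)))]
      exact (adw_expand k m).symm
end

section
/- Let 𝔉₂ be the completed free Lie algebra over a field k of characteristic 0 on generators X, Y. Suppose R ∈ 𝔉₂ is of the form R = Σ_{m≥1} a_m (ad Y)^{m-1}(X) with a_m ∈ k, and suppose R(X,Y) = −R(Y,X) (antisymmetry under swapping the two generators). Then a_m = 0 for all m ≠ 2, i.e. R = a_2 [Y,X]. -/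
open scoped BigOperators

variable {k : Type*}

section DA
variable {k : Type*} [CommRing k] {A : Type*} [Ring A]

lemma coeff_lin (a : A) (n : ℕ) :
    PowerSeries.coeff n (lin a) = if n = 1 then a else 0 := by
  simp [lin]

lemma coeff_lin_mul_zero (a : A) (s : PowerSeries A) :
    PowerSeries.coeff 0 (lin a * s) = 0 := by
  simp [PowerSeries.coeff_mul, coeff_lin]

lemma coeff_mul_lin_zero (a : A) (s : PowerSeries A) :
    PowerSeries.coeff 0 (s * lin a) = 0 := by
  simp [PowerSeries.coeff_mul, coeff_lin]

lemma coeff_lin_mul_succ (a : A) (s : PowerSeries A) (n : ℕ) :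
    PowerSeries.coeff (n+1) (lin a * s) = a * PowerSeries.coeff n s := by
  rw [PowerSeries.coeff_mul, Finset.sum_eq_single ((1 : ℕ), n)]
  · simp [coeff_lin]
  · rintro ⟨i, j⟩ hij hne
    rw [Finset.HasAntidiagonal.mem_antidiagonal] at hij
    rcases eq_or_ne i 1 with rfl | hi
    · exact absurd (by simp [show j = n by omega]) hne
    · simp [coeff_lin, hi]
  · intro h; exact absurd (Finset.HasAntidiagonal.mem_antidiagonal.2 (by omega)) h

lemma coeff_mul_lin_succ (a : A) (s : PowerSeries A) (n : ℕ) :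
    PowerSeries.coeff (n+1) (s * lin a) = PowerSeries.coeff n s * a := by
  rw [PowerSeries.coeff_mul, Finset.sum_eq_single ((n : ℕ), 1)]
  · simp [coeff_lin]
  · rintro ⟨i, j⟩ hij hne
    rw [Finset.HasAntidiagonal.mem_antidiagonal] at hij
    rcases eq_or_ne j 1 with rfl | hj
    · exact absurd (by simp [show i = n by omega]) hne
    · simp [coeff_lin, hj]
  · intro h; exact absurd (Finset.HasAntidiagonal.mem_antidiagonal.2 (by omega)) h

lemma coeff_lin_prod (l : List A) (n : ℕ) :
    PowerSeries.coeff n ((l.map lin).prod) = if n = l.length then l.prod else 0 := by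
  induction l generalizing n with
  | nil => simp [PowerSeries.coeff_one]
  | cons a l ih =>
    rcases n with _ | n
    · simp [coeff_lin_mul_zero]
    · rw [List.map_cons, List.prod_cons, coeff_lin_mul_succ, ih, List.length_cons,
        List.prod_cons]
      by_cases h : n = l.length <;> simp [h]

lemma coeff_lin_mul_lin (a b : A) (n : ℕ) :
    PowerSeries.coeff n (lin a * lin b) = if n = 2 then a * b else 0 := by
  rcases n with _ | n
  · simp [coeff_lin_mul_zero]
  · rw [coeff_lin_mul_succ, coeff_lin]
    by_cases h : n = 1 <;> simp [h, Nat.succ_inj]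

end DA


section DB
variable {k : Type*} [CommRing k]

noncomputable def Eel (k : Type*) [CommRing k] : ℕ → FreeAlgebra k (Fin 2)
  | 0 => FreeAlgebra.ι k 0
  | m+1 => FreeAlgebra.ι k 1 * Eel k m - Eel k m * FreeAlgebra.ι k 1

lemma coeff_adYiter (m n : ℕ) :
    PowerSeries.coeff n (adYiter k m) = if n = m + 1 then Eel k m else 0 := by
  induction m generalizing n with
  | zero =>
    rw [show adYiter k 0 = lin (FreeAlgebra.ι k 0) from rfl, coeff_lin]
    rfl
  | succ m ih =>
    have hs : adYiter k (m+1) = YF k * adYiter k m - adYiter k m * YF k :=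
      Function.iterate_succ_apply' _ _ _
    rw [hs, map_sub, show YF k = lin (FreeAlgebra.ι k 1) from rfl]
    rcases n with _ | n
    · simp [coeff_lin_mul_zero, coeff_mul_lin_zero]
    · rw [coeff_lin_mul_succ, coeff_mul_lin_succ, ih]
      by_cases h : n = m + 1 <;> simp [h, Eel, Nat.succ_inj]

noncomputable def fm (k : Type*) [CommRing k] :
    FreeAlgebra k (Fin 2) ≃ₐ[k] MonoidAlgebra k (FreeMonoid (Fin 2)) :=
  FreeAlgebra.equivMonoidAlgebraFreeMonoid

lemma fm_ι (i : Fin 2) :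
    fm k (FreeAlgebra.ι k i) = MonoidAlgebra.single (FreeMonoid.of i) 1 := by
  simp [fm, FreeAlgebra.equivMonoidAlgebraFreeMonoid]

lemma fm_mono (w : Word 2) :
    fm k ((w.map (FreeAlgebra.ι k)).prod)
      = MonoidAlgebra.single (FreeMonoid.ofList w) 1 := by
  induction w with
  | nil => simp [MonoidAlgebra.one_def]
  | cons i w ih =>
    rw [List.map_cons, List.prod_cons, map_mul, fm_ι, ih,
      MonoidAlgebra.single_mul_single, one_mul, FreeMonoid.ofList_cons]

lemma Eel_support_count (m : ℕ) :
    ∀ w ∈ (fm k (Eel k m)).coeff.support,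
      List.count (0 : Fin 2) (FreeMonoid.toList w) = 1 := by
  classical
  induction m with
  | zero =>
    intro w hw
    rw [show Eel k 0 = FreeAlgebra.ι k 0 from rfl, fm_ι] at hw
    have h := Finsupp.support_single_subset hw
    rw [Finset.mem_singleton] at h
    subst h
    rfl
  | succ m ih =>
    intro w hw
    rw [show Eel k (m+1)
        = FreeAlgebra.ι k 1 * Eel k m - Eel k m * FreeAlgebra.ι k 1 from rfl,
      map_sub, map_mul, map_mul, fm_ι, MonoidAlgebra.coeff_sub] at hw
    rcases Finset.mem_union.1 (Finsupp.support_sub hw) with h | h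
    · obtain ⟨v, hv, rfl⟩ := Finset.mem_image.1
        (MonoidAlgebra.support_coeff_single_mul_subset (fm k (Eel k m)) 1 (FreeMonoid.of 1) h)
      have hc := ih v hv
      show List.count (0 : Fin 2) (FreeMonoid.toList (FreeMonoid.of 1 * v)) = 1
      rw [FreeMonoid.toList_mul, List.count_append, FreeMonoid.toList_of]
      simpa using hc
    · obtain ⟨v, hv, rfl⟩ := Finset.mem_image.1
        (MonoidAlgebra.support_coeff_mul_single_subset (fm k (Eel k m)) 1 (FreeMonoid.of 1) h)
      have hc := ih v hv
      show List.count (0 : Fin 2) (FreeMonoid.toList (v * FreeMonoid.of 1)) = 1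
      rw [FreeMonoid.toList_mul, List.count_append, FreeMonoid.toList_of]
      simpa using hc

lemma fm_Eel_eq_zero {m : ℕ} {w : Word 2} (h : List.count (0 : Fin 2) w ≠ 1) :
    (fm k (Eel k m)).coeff (FreeMonoid.ofList w) = 0 := by
  by_contra hne
  exact h (Eel_support_count m _ (Finsupp.mem_support_iff.2 hne))

lemma Eel_top (m : ℕ) :
    (fm k (Eel k m)).coeff (FreeMonoid.ofList (List.replicate m 1 ++ [0])) = 1 := by
  induction m with
  | zero =>
    rw [show Eel k 0 = FreeAlgebra.ι k 0 from rfl, fm_ι]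
    exact Finsupp.single_eq_same
  | succ m ih =>
    rw [show Eel k (m+1)
        = FreeAlgebra.ι k 1 * Eel k m - Eel k m * FreeAlgebra.ι k 1 from rfl,
      map_sub, map_mul, map_mul, fm_ι]
    have heq : FreeMonoid.ofList (List.replicate (m+1) 1 ++ [(0 : Fin 2)])
        = FreeMonoid.of 1 * FreeMonoid.ofList (List.replicate m 1 ++ [0]) := by
      rw [List.replicate_succ, List.cons_append, FreeMonoid.ofList_cons]
    have h1 : (MonoidAlgebra.single (FreeMonoid.of (1 : Fin 2)) (1 : k)
          * fm k (Eel k m)).coeff (FreeMonoid.ofList (List.replicate (m+1) 1 ++ [0]))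
        = 1 * (fm k (Eel k m)).coeff (FreeMonoid.ofList (List.replicate m 1 ++ [0])) := by
      apply MonoidAlgebra.single_mul_apply_aux
      intro a _
      rw [heq]
      exact mul_right_inj _
    have h2 : ((fm k (Eel k m))
          * MonoidAlgebra.single (FreeMonoid.of (1 : Fin 2)) (1 : k)).coeff
          (FreeMonoid.ofList (List.replicate (m+1) 1 ++ [0])) = 0 := by
      apply MonoidAlgebra.mul_single_apply_of_not_exists_mul
      rintro ⟨d, hd⟩
      have := congrArg (fun x => (FreeMonoid.toList x).getLast?) hd
      simp only [FreeMonoid.toList_mul, FreeMonoid.toList_of,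
        FreeMonoid.toList_ofList, List.getLast?_concat] at this
      exact absurd this (by simp)
    rw [MonoidAlgebra.coeff_sub, Finsupp.sub_apply, h1, h2, ih, one_mul, sub_zero]

end DB


section DC
variable {k : Type*} [CommRing k]

lemma coeff_substXY (φ : NC k 2) (n : ℕ) :
    PowerSeries.coeff n (substPS φ (XF k) (YF k)) =
      ∑ u : Fin n → Fin 2,
        φ (List.ofFn u) • ((List.ofFn u).map (FreeAlgebra.ι k)).prod := by
  rw [substPS, PowerSeries.coeff_mk]
  have key : ∀ (m : ℕ) (u : Fin m → Fin 2),
      PowerSeries.coeff n (((List.ofFn u).map ![XF k, YF k]).prod)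
        = if n = m then ((List.ofFn u).map (FreeAlgebra.ι k)).prod else 0 := by
    intro m u
    have hmap : (List.ofFn u).map ![XF k, YF k]
        = ((List.ofFn u).map (FreeAlgebra.ι k)).map lin := by
      rw [List.map_map]
      apply List.map_congr_left
      intro i _
      fin_cases i <;> rfl
    rw [hmap, coeff_lin_prod, List.length_map, List.length_ofFn]
  rw [Finset.sum_eq_single n]
  · exact Finset.sum_congr rfl fun u _ => by rw [key, if_pos rfl]
  · intro m _ hm
    apply Finset.sum_eq_zero
    intro u _
    rw [key, if_neg (by omega), smul_zero]
  · intro h; exact absurd (Finset.self_mem_range_succ n) h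

lemma keyR (R : NC k 2) (a : ℕ → k)
    (ha : ∀ n : ℕ,
      PowerSeries.coeff n (substPS R (XF k) (YF k)) =
        a n • PowerSeries.coeff n (adYiter k (n - 1)))
    (w : Word 2) (hw : w ≠ []) :
    R w = a w.length * (fm k (Eel k (w.length - 1))).coeff (FreeMonoid.ofList w) := by
  have h := ha w.length
  have hlp := List.length_pos_iff.2 hw
  rw [coeff_substXY, coeff_adYiter,
    if_pos (show w.length = w.length - 1 + 1 by omega)] at h
  have h2 := congrArg
    (fun x => (Finsupp.lapply (FreeMonoid.ofList w) : _ →ₗ[k] k) (fm k x).coeff) h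
  simp only [map_sum, map_smul, fm_mono, MonoidAlgebra.coeff_sum, MonoidAlgebra.coeff_smul,
    MonoidAlgebra.coeff_single, Finsupp.lapply_apply, smul_eq_mul,
    MonoidAlgebra.single_apply] at h2
  rw [Finset.sum_eq_single w.get] at h2
  · rw [List.ofFn_get, Finsupp.single_eq_same, mul_one] at h2
    exact h2
  · intro u _ hu
    rw [Finsupp.single_eq_of_ne', mul_zero]
    intro hc
    exact hu (List.ofFn_injective (by
      rw [List.ofFn_get]
      exact FreeMonoid.ofList.injective hc))
  · intro hmem; exact absurd (Finset.mem_univ _) hmem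

end DC


/-- If a Lie series `R ∈ 𝔉₂` is of the form `R = Σ_{m≥1} a_m (ad Y)^{m-1}(X)`
and satisfies the antisymmetry `R(X,Y) = -R(Y,X)` (swap of the two
generators), then `a_m = 0` for all `m ≠ 2`, i.e. `R = a₂ [Y,X]`. -/
theorem statement2 (k : Type*) [Field k] [CharZero k] (R : NC k 2)
    (hR : IsLieLike R) (a : ℕ → k)
    (ha : ∀ n : ℕ,
      PowerSeries.coeff n (substPS R (XF k) (YF k)) =
        a n • PowerSeries.coeff n (adYiter k (n - 1)))
    (hanti : ∀ w : Word 2, R (w.map ![1, 0]) = -R w) :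
    (∀ m : ℕ, 1 ≤ m → m ≠ 2 → a m = 0) ∧
      substPS R (XF k) (YF k) = a 2 • (YF k * XF k - XF k * YF k) := by
  classical
  have hvan : ∀ m : ℕ, 1 ≤ m → m ≠ 2 → a m = 0 := by
    intro m hm hne
    have h1 := keyR R a ha (List.replicate (m-1) 1 ++ [0]) (by simp)
    have hlen : (List.replicate (m-1) (1 : Fin 2) ++ [0]).length = m := by
      simp; omega
    rw [hlen, Eel_top, mul_one] at h1
    have h2 := keyR R a ha (List.replicate (m-1) 0 ++ [1]) (by simp)
    have hlen2 : (List.replicate (m-1) (0 : Fin 2) ++ [1]).length = m := by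
      simp; omega
    rw [hlen2, fm_Eel_eq_zero (by
        rw [List.count_append, List.count_replicate]
        simp
        omega), mul_zero] at h2
    have h3 := hanti (List.replicate (m-1) 1 ++ [0])
    have hmap : (List.replicate (m-1) (1 : Fin 2) ++ [0]).map ![1, 0]
        = (List.replicate (m-1) 0 ++ [1] : Word 2) := by
      simp [List.map_replicate]
    rw [hmap] at h3
    rw [h2] at h3
    rw [h1] at h3
    exact neg_eq_zero.1 h3.symm
  refine ⟨hvan, ?_⟩
  ext n
  have hks : ∀ (c : k) (f : PowerSeries (FreeAlgebra k (Fin 2))),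
      PowerSeries.coeff n (c • f) = c • PowerSeries.coeff n f := fun c f => rfl
  rw [ha n, coeff_adYiter, hks, map_sub,
    show YF k = lin (FreeAlgebra.ι k 1) from rfl,
    show XF k = lin (FreeAlgebra.ι k 0) from rfl,
    coeff_lin_mul_lin, coeff_lin_mul_lin]
  rcases n with _ | _ | _ | n
  · norm_num
  · rw [hvan 1 le_rfl (by omega)]
    norm_num
  · norm_num [Eel]
  · rw [hvan (n+3) (by omega) (by omega),
      if_neg (show ¬(n+1+1+1 = 2) by omega)]
    simp
end

section
/- Let φ be a commutator group-like element of k⟨⟨X,Y⟩⟩ (group-like with vanishing coefficients of X and Y). Then for any elements A, B, C of a complete topological k-algebra S generated by primitive-compatible images such that [A,C]=0 and [B,C]=0, one has φ(A+C, B) = φ(A, B+C) = φ(A, B). -/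
open scoped BigOperators

variable {k : Type*}

section AuxStatement6

theorem shuffle_map {α β} (h : α → β) : ∀ u v : List α,
    (shuffle u v).map (List.map h) = shuffle (u.map h) (v.map h) := by
  intro u v
  induction u, v using shuffle.induct with
  | case1 v => simp [shuffle]
  | case2 u h2 => cases u with
    | nil => simp [shuffle]
    | cons a u => simp [shuffle]
  | case3 a u b v ih1 ih2 =>
      simp only [List.map_cons]
      simp only [shuffle, List.map_append]
      simp only [List.map_cons] at ih1 ih2
      rw [← ih1, ← ih2, List.map_map, List.map_map, List.map_map, List.map_map]
      simp [Function.comp_def]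

theorem shuffle_ne_nil {α} : ∀ u v : List α, shuffle u v ≠ [] := by
  intro u v
  induction u, v using shuffle.induct with
  | case1 v => simp [shuffle]
  | case2 u h2 => cases u with
    | nil => simp [shuffle]
    | cons a u => simp [shuffle]
  | case3 a u b v ih1 ih2 => simp [shuffle, ih1]

theorem length_of_mem_shuffle {α} : ∀ u v w : List α, w ∈ shuffle u v →
    w.length = u.length + v.length := by
  intro u v
  induction u, v using shuffle.induct with
  | case1 v => intro w hw; simp [shuffle] at hw; simp [hw]
  | case2 u h2 => cases u with
    | nil => intro w hw; simp [shuffle] at hw; simp [hw]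
    | cons a u => intro w hw; simp [shuffle] at hw; simp [hw]
  | case3 a u b v ih1 ih2 =>
      intro w hw
      simp only [shuffle, List.mem_append, List.mem_map] at hw
      rcases hw with ⟨w', hw', rfl⟩ | ⟨w', hw', rfl⟩
      · simp [ih1 w' hw']; omega
      · simp [ih2 w' hw']; omega

theorem mem_of_mem_shuffle {α} : ∀ u v w : List α, w ∈ shuffle u v →
    ∀ x ∈ w, x ∈ u ∨ x ∈ v := by
  intro u v
  induction u, v using shuffle.induct with
  | case1 v => intro w hw; simp [shuffle] at hw; simp [hw]
  | case2 u h2 => cases u with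
    | nil => intro w hw; simp [shuffle] at hw; simp [hw]
    | cons a u => intro w hw; simp [shuffle] at hw; simp [hw]
  | case3 a u b v ih1 ih2 =>
      intro w hw
      simp only [shuffle, List.mem_append, List.mem_map] at hw
      rcases hw with ⟨w', hw', rfl⟩ | ⟨w', hw', rfl⟩
      · intro x hx
        rcases List.mem_cons.1 hx with rfl | hx
        · simp
        · rcases ih1 w' hw' x hx with h | h
          · exact Or.inl (List.mem_cons_of_mem _ h)
          · exact Or.inr h
      · intro x hx
        rcases List.mem_cons.1 hx with rfl | hx
        · simp
        · rcases ih2 w' hw' x hx with h | h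
          · exact Or.inl h
          · exact Or.inr (List.mem_cons_of_mem _ h)

def pi3 : Fin 3 → Fin 2 := ![0, 1, 0]
def emb2 : Fin 2 → Fin 3 := ![0, 1]

def stW : List (Fin 3) → List (Fin 2)
  | [] => []
  | a :: v => if a = 2 then stW v else pi3 a :: stW v

def cntW : List (Fin 3) → ℕ
  | [] => 0
  | a :: v => (if a = 2 then 1 else 0) + cntW v

theorem stW_all2 : ∀ u : List (Fin 3), (∀ x ∈ u, x = 2) → stW u = [] ∧ cntW u = u.length := by
  intro u hu
  induction u with
  | nil => simp [stW, cntW]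
  | cons a u ih =>
      have ha : a = 2 := hu a (by simp)
      have := ih (fun x hx => hu x (List.mem_cons_of_mem _ hx))
      simp [stW, cntW, ha, this.1, this.2] <;> omega

theorem shuffle_sep : ∀ u v : List (Fin 3), (∀ x ∈ u, x = 2) →
    ∀ w ∈ shuffle u v, stW w = stW v ∧ cntW w = u.length + cntW v := by
  intro u v
  induction u, v using shuffle.induct with
  | case1 v => intro _ w hw; simp [shuffle] at hw; simp [hw]
  | case2 u h2 =>
      intro hu w hw
      cases u with
      | nil => simp [shuffle] at hw; simp [hw, stW, cntW]
      | cons a u =>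
          simp [shuffle] at hw
          subst hw
          have ha : a = 2 := hu a (by simp)
          obtain ⟨h1, h2⟩ := stW_all2 u (fun x hx => hu x (List.mem_cons_of_mem _ hx))
          refine ⟨by simp [stW, ha, h1], by simp [cntW, ha, h2] <;> omega⟩
  | case3 a u b v ih1 ih2 =>
      intro hu w hw
      have ha : a = 2 := hu a (by simp)
      simp only [shuffle, List.mem_append, List.mem_map] at hw
      rcases hw with ⟨w', hw', rfl⟩ | ⟨w', hw', rfl⟩
      · have h1 := ih1 (fun x hx => hu x (List.mem_cons_of_mem _ hx)) w' hw'
        subst ha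
        simp [stW, cntW, h1.1, h1.2]
        omega
      · have h2 := ih2 hu w' hw'
        constructor
        · by_cases hb : b = 2 <;> simp [stW, hb, h2.1]
        · simp [cntW, h2.2]
          omega

theorem stW_map_emb : ∀ s : List (Fin 2), stW (s.map emb2) = s := by
  intro s
  induction s with
  | nil => simp [stW]
  | cons a s ih =>
      have h1 : emb2 a ≠ 2 := by fin_cases a <;> decide
      have h2 : pi3 (emb2 a) = a := by fin_cases a <;> decide
      simp [stW, h1, h2, ih]

theorem cntW_map_emb : ∀ s : List (Fin 2), cntW (s.map emb2) = 0 := by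
  intro s
  induction s with
  | nil => simp [cntW]
  | cons a s ih =>
      have h1 : emb2 a ≠ 2 := by fin_cases a <;> decide
      simp [cntW, h1, ih]

theorem mem_shuffle_replicate {j l : ℕ} {w : List (Fin 2)}
    (hw : w ∈ shuffle (List.replicate j (0:Fin 2)) (List.replicate l 0)) :
    w = List.replicate (j + l) 0 := by
  have hlen := length_of_mem_shuffle _ _ _ hw
  simp only [List.length_replicate] at hlen
  refine List.eq_replicate_iff.2 ⟨by simp [hlen], ?_⟩
  intro b hb
  rcases mem_of_mem_shuffle _ _ _ hw b hb with h | h <;> exact List.eq_of_mem_replicate h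

theorem groupLike_replicate_eq_zero {k : Type*} [Field k] [CharZero k] {φ : NC k 2}
    (hgl : IsGroupLike φ) (h0 : φ [0] = 0) :
    ∀ j : ℕ, φ (List.replicate (j+1) (0:Fin 2)) = 0 := by
  intro j
  induction j with
  | zero => simpa using h0
  | succ j ih =>
      have key := hgl.2 [0] (List.replicate (j+1) 0)
      rw [ih, mul_zero] at key
      have hall : ∀ x ∈ (shuffle [(0:Fin 2)] (List.replicate (j+1) 0)).map φ,
          x = φ (List.replicate (j+1+1) 0) := by
        intro x hx
        rcases List.mem_map.1 hx with ⟨w, hw, rfl⟩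
        have hw' : w ∈ shuffle (List.replicate 1 (0:Fin 2)) (List.replicate (j+1) 0) := by
          simpa using hw
        have := mem_shuffle_replicate hw'
        rw [this, Nat.add_comm 1 (j+1)]
      have hsum := List.sum_eq_card_nsmul _ _ hall
      rw [← key] at hsum
      have hne := shuffle_ne_nil [(0:Fin 2)] (List.replicate (j+1) 0)
      have hlen : ((shuffle [(0:Fin 2)] (List.replicate (j+1) 0)).map φ).length ≠ 0 := by
        simpa [List.length_eq_zero_iff] using hne
      rw [nsmul_eq_mul] at hsum
      rcases mul_eq_zero.1 hsum.symm with h | h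
      · exact absurd (Nat.cast_eq_zero.1 h) hlen
      · exact h

def allW2 : ℕ → List (Word 2)
  | 0 => [[]]
  | m+1 => ((allW2 m).map ((0 : Fin 2) :: ·)) ++ ((allW2 m).map ((1 : Fin 2) :: ·))

def allW3 : ℕ → List (List (Fin 3))
  | 0 => [[]]
  | m+1 => ((allW3 m).map ((0 : Fin 3) :: ·)) ++
      (((allW3 m).map ((1 : Fin 3) :: ·)) ++ ((allW3 m).map ((2 : Fin 3) :: ·)))

theorem ofFn_cons' {α : Type*} {m : ℕ} (a : α) (u : Fin m → α) :
    List.ofFn (Fin.cons a u) = a :: List.ofFn u := by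
  rw [List.ofFn_succ]
  simp

theorem sum_ofFn_allW2 {M : Type*} [AddCommMonoid M] :
    ∀ (m : ℕ) (f : Word 2 → M),
      (∑ u : Fin m → Fin 2, f (List.ofFn u)) = ((allW2 m).map f).sum := by
  intro m
  induction m with
  | zero =>
      intro f
      rw [Fintype.sum_unique]
      simp [allW2]
  | succ m ih =>
      intro f
      rw [← Equiv.sum_comp (Fin.consEquiv (fun _ : Fin (m+1) => Fin 2))
        (fun u => f (List.ofFn u)), Fintype.sum_prod_type]
      have hc : ∀ (x : Fin 2) (y : Fin m → Fin 2),
          (Fin.consEquiv fun _ : Fin (m+1) => Fin 2) (x, y) = Fin.cons x y := fun _ _ => rfl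
      simp only [hc, ofFn_cons']
      rw [Fin.sum_univ_two, ih (fun w => f ((0:Fin 2) :: w)), ih (fun w => f ((1:Fin 2) :: w))]
      show _ = ((allW2 (m+1)).map f).sum
      simp only [allW2, List.map_append, List.sum_append, List.map_map, Function.comp_def]

theorem fin2_cases : ∀ a : Fin 2, a = 0 ∨ a = 1 := by decide

theorem fin3_cases : ∀ a : Fin 3, a = 0 ∨ a = 1 ∨ a = 2 := by decide

section ProdAux

variable {R : Type*} [Ring R]

/-- product of the word `w` in the letters `A`, `B` -/
def p2 (A B : R) : Word 2 → R
  | [] => 1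
  | a :: w => ![A, B] a * p2 A B w

/-- product of the word `v` in the letters `A`, `B`, `C` -/
def p3 (A B C : R) : List (Fin 3) → R
  | [] => 1
  | a :: v => ![A, B, C] a * p3 A B C v

theorem p2_prod (A B : R) : ∀ w : Word 2, p2 A B w = (w.map ![A, B]).prod := by
  intro w
  induction w with
  | nil => simp [p2]
  | cons a w ih => simp [p2, ih]

theorem p3_eq (A B C : R) (hAC : A * C = C * A) (hBC : B * C = C * B) :
    ∀ v : List (Fin 3), p3 A B C v = C ^ cntW v * p2 A B (stW v) := by
  have hac : Commute A C := hAC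
  have hbc : Commute B C := hBC
  have hA : ∀ j : ℕ, A * C ^ j = C ^ j * A := fun j => (hac.pow_right j).eq
  have hB : ∀ j : ℕ, B * C ^ j = C ^ j * B := fun j => (hbc.pow_right j).eq
  intro v
  induction v with
  | nil => simp [p3, p2, stW, cntW]
  | cons a v ih =>
      rcases fin3_cases a with rfl | rfl | rfl
      · show A * p3 A B C v = C ^ cntW ((0:Fin 3) :: v) * p2 A B (stW ((0:Fin 3) :: v))
        rw [show cntW ((0:Fin 3) :: v) = cntW v from by simp [cntW],
          show stW ((0:Fin 3) :: v) = (0:Fin 2) :: stW v from by simp [stW]; rfl,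
          show p2 A B ((0:Fin 2) :: stW v) = A * p2 A B (stW v) from by simp [p2],
          ih, ← mul_assoc, hA, mul_assoc]
      · show B * p3 A B C v = C ^ cntW ((1:Fin 3) :: v) * p2 A B (stW ((1:Fin 3) :: v))
        rw [show cntW ((1:Fin 3) :: v) = cntW v from by simp [cntW],
          show stW ((1:Fin 3) :: v) = (1:Fin 2) :: stW v from by simp [stW]; rfl,
          show p2 A B ((1:Fin 2) :: stW v) = B * p2 A B (stW v) from by simp [p2],
          ih, ← mul_assoc, hB, mul_assoc]
      · show C * p3 A B C v = C ^ cntW ((2:Fin 3) :: v) * p2 A B (stW ((2:Fin 3) :: v))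
        rw [show cntW ((2:Fin 3) :: v) = cntW v + 1 from by simp [cntW]; omega,
          show stW ((2:Fin 3) :: v) = stW v from by simp [stW],
          ih, ← mul_assoc, ← pow_succ']

/-- the list of three-letter words refining a given two-letter word, where the
letter `0` can be refined into `0` or `2`. -/
def fibL : Word 2 → List (List (Fin 3))
  | [] => [[]]
  | a :: w =>
      if a = 0 then ((fibL w).map ((0 : Fin 3) :: ·)) ++ ((fibL w).map ((2 : Fin 3) :: ·))
      else (fibL w).map ((1 : Fin 3) :: ·)

theorem fibL_zero (w : Word 2) : fibL ((0:Fin 2) :: w)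
    = ((fibL w).map ((0 : Fin 3) :: ·)) ++ ((fibL w).map ((2 : Fin 3) :: ·)) := by
  simp [fibL]

theorem fibL_one (w : Word 2) : fibL ((1:Fin 2) :: w) = (fibL w).map ((1 : Fin 3) :: ·) := by
  simp [fibL]

theorem fibL_map_pi3 : ∀ w : Word 2, ∀ v ∈ fibL w, v.map pi3 = w := by
  intro w
  induction w with
  | nil => intro v hv; simp [fibL] at hv; simp [hv]
  | cons a w ih =>
      intro v hv
      rcases fin2_cases a with rfl | rfl
      · rw [fibL_zero] at hv
        simp only [List.mem_append, List.mem_map] at hv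
        rcases hv with ⟨v', hv', rfl⟩ | ⟨v', hv', rfl⟩ <;>
          · rw [List.map_cons, ih v' hv']
            rfl
      · rw [fibL_one] at hv
        simp only [List.mem_map] at hv
        rcases hv with ⟨v', hv', rfl⟩
        rw [List.map_cons, ih v' hv']
        rfl

theorem exp_fibL (A B C : R) :
    ∀ w : Word 2, p2 (A + C) B w = ((fibL w).map (p3 A B C)).sum := by
  intro w
  induction w with
  | nil => simp [p2, fibL, p3]
  | cons a w ih =>
      rcases fin2_cases a with rfl | rfl
      · show (A + C) * p2 (A + C) B w = _
        rw [fibL_zero]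
        rw [List.map_append, List.sum_append, List.map_map, List.map_map, ih, add_mul]
        congr 1
        · rw [show ((p3 A B C) ∘ ((0 : Fin 3) :: ·)) = fun v => A * p3 A B C v from rfl,
            List.sum_map_mul_left]
        · rw [show ((p3 A B C) ∘ ((2 : Fin 3) :: ·)) = fun v => C * p3 A B C v from rfl,
            List.sum_map_mul_left]
      · show B * p2 (A + C) B w = _
        rw [fibL_one]
        rw [List.map_map, ih,
          show ((p3 A B C) ∘ ((1 : Fin 3) :: ·)) = fun v => B * p3 A B C v from rfl,
          List.sum_map_mul_left]

end ProdAux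

section ShufSum

theorem emb2_zero : emb2 0 = 0 := rfl
theorem emb2_one : emb2 1 = 1 := rfl

variable {M : Type*} [AddCommMonoid M]

theorem list_map_add_sum {α : Type*} (l : List α) (f g : α → M) :
    (l.map fun x => f x + g x).sum = (l.map f).sum + (l.map g).sum := by
  induction l with
  | nil => simp
  | cons a l ih => simp [ih]; abel

theorem shuffle_nil_left {α : Type*} (v : List α) : shuffle [] v = [v] := by
  simp [shuffle]

theorem shuffle_nil_right {α : Type*} (u : List α) : shuffle u [] = [u] := by
  cases u <;> simp [shuffle]

theorem shuffle_cons_cons {α : Type*} (a b : α) (u v : List α) :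
    shuffle (a :: u) (b :: v)
      = ((shuffle u (b :: v)).map (a :: ·)) ++ ((shuffle (a :: u) v).map (b :: ·)) := by
  rw [shuffle]

/-- sum of `g` over all insertions of `j` letters `2` into (the `Fin 3`-embedding of)
the word `s`. -/
def Sg (g : List (Fin 3) → M) (j : ℕ) (s : Word 2) : M :=
  ((shuffle (List.replicate j (2:Fin 3)) (s.map emb2)).map g).sum

theorem Sg_zero (g : List (Fin 3) → M) (s : Word 2) : Sg g 0 s = g (s.map emb2) := by
  simp [Sg, shuffle_nil_left]

theorem Sg_succ_nil (g : List (Fin 3) → M) (j : ℕ) :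
    Sg g (j+1) [] = Sg (fun v => g ((2:Fin 3) :: v)) j [] := by
  simp [Sg, shuffle_nil_right, List.replicate_succ]

theorem Sg_succ_cons (g : List (Fin 3) → M) (j : ℕ) (a : Fin 2) (s : Word 2) :
    Sg g (j+1) (a :: s) = Sg (fun v => g ((2:Fin 3) :: v)) j (a :: s)
      + Sg (fun v => g (emb2 a :: v)) (j+1) s := by
  show ((shuffle ((2:Fin 3) :: List.replicate j 2) (emb2 a :: s.map emb2)).map g).sum = _
  rw [shuffle_cons_cons, List.map_append, List.sum_append, List.map_map, List.map_map]
  rfl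

theorem allW2_succ_sum (m : ℕ) (F : Word 2 → M) :
    ((allW2 (m+1)).map F).sum
      = ((allW2 m).map (fun t => F ((0:Fin 2) :: t))).sum
        + ((allW2 m).map (fun t => F ((1:Fin 2) :: t))).sum := by
  rw [show allW2 (m+1)
      = ((allW2 m).map ((0 : Fin 2) :: ·)) ++ ((allW2 m).map ((1 : Fin 2) :: ·)) from rfl,
    List.map_append, List.sum_append, List.map_map, List.map_map]
  rfl

theorem allW3_succ_sum (m : ℕ) (F : List (Fin 3) → M) :
    ((allW3 (m+1)).map F).sum
      = ((allW3 m).map (fun t => F ((0:Fin 3) :: t))).sum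
        + (((allW3 m).map (fun t => F ((1:Fin 3) :: t))).sum
          + ((allW3 m).map (fun t => F ((2:Fin 3) :: t))).sum) := by
  rw [show allW3 (m+1) = ((allW3 m).map ((0 : Fin 3) :: ·)) ++
      (((allW3 m).map ((1 : Fin 3) :: ·)) ++ ((allW3 m).map ((2 : Fin 3) :: ·))) from rfl,
    List.map_append, List.sum_append, List.map_append, List.sum_append,
    List.map_map, List.map_map, List.map_map]
  rfl

theorem fib_sum : ∀ (m : ℕ) (g : List (Fin 3) → M),
    ((allW2 m).map (fun w => ((fibL w).map g).sum)).sum = ((allW3 m).map g).sum := by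
  intro m
  induction m with
  | zero => intro g; simp [allW2, allW3, fibL]
  | succ m ih =>
      intro g
      have h0 : ∀ t : Word 2, ((fibL ((0:Fin 2) :: t)).map g).sum
          = ((fibL t).map (fun v => g ((0:Fin 3) :: v))).sum
            + ((fibL t).map (fun v => g ((2:Fin 3) :: v))).sum := by
        intro t
        rw [fibL_zero, List.map_append, List.sum_append, List.map_map, List.map_map]
        rfl
      have h1 : ∀ t : Word 2, ((fibL ((1:Fin 2) :: t)).map g).sum
          = ((fibL t).map (fun v => g ((1:Fin 3) :: v))).sum := by
        intro t
        rw [fibL_one, List.map_map]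
        rfl
      rw [allW2_succ_sum]
      simp only [h0, h1]
      rw [list_map_add_sum, ih (fun v => g ((0:Fin 3) :: v)), ih (fun v => g ((2:Fin 3) :: v)),
        ih (fun v => g ((1:Fin 3) :: v)), allW3_succ_sum]
      abel

theorem total_shuffle : ∀ (m : ℕ) (g : List (Fin 3) → M),
    ((allW3 m).map g).sum
      = ∑ j ∈ Finset.range (m+1), ((allW2 (m-j)).map (fun s => Sg g j s)).sum := by
  intro m
  induction m with
  | zero =>
      intro g
      simp [allW3, allW2, Sg_zero]
  | succ m ih =>
      intro g
      rw [allW3_succ_sum, ih (fun v => g ((0:Fin 3) :: v)), ih (fun v => g ((1:Fin 3) :: v)),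
        ih (fun v => g ((2:Fin 3) :: v))]
      have hstep : ∀ i ∈ Finset.range (m+1),
          ((allW2 (m+1-(i+1))).map (fun s => Sg g (i+1) s)).sum
            = ((allW2 (m-i)).map (fun s => Sg (fun v => g ((2:Fin 3) :: v)) i s)).sum
              + (if i = m then 0 else
                  ((allW2 (m-(i+1))).map (fun t => Sg (fun v => g ((0:Fin 3) :: v)) (i+1) t)).sum
                  + ((allW2 (m-(i+1))).map (fun t => Sg (fun v => g ((1:Fin 3) :: v)) (i+1) t)).sum) := by
        intro i hi
        rw [Nat.succ_sub_succ]
        by_cases him : i = m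
        · subst him
          rw [if_pos rfl, Nat.sub_self, add_zero]
          show Sg g (i+1) [] + 0 = Sg (fun v => g ((2:Fin 3) :: v)) i [] + 0
          rw [Sg_succ_nil]
        · rw [if_neg him]
          have hi' : i < m := lt_of_le_of_ne (Nat.lt_succ_iff.1 (Finset.mem_range.1 hi)) him
          have hmi : m - i = (m - (i+1)) + 1 := by omega
          conv_lhs => rw [hmi, allW2_succ_sum]
          conv_rhs => rw [hmi, allW2_succ_sum]
          simp only [Sg_succ_cons, emb2_zero, emb2_one]
          rw [list_map_add_sum, list_map_add_sum]
          abel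
      have hsum1 : (∑ i ∈ Finset.range (m+1),
            ((allW2 (m+1-(i+1))).map (fun s => Sg g (i+1) s)).sum)
          = (∑ j ∈ Finset.range (m+1),
              ((allW2 (m-j)).map (fun s => Sg (fun v => g ((2:Fin 3) :: v)) j s)).sum)
            + ∑ i ∈ Finset.range (m+1), (if i = m then 0 else
                  ((allW2 (m-(i+1))).map (fun t => Sg (fun v => g ((0:Fin 3) :: v)) (i+1) t)).sum
                  + ((allW2 (m-(i+1))).map (fun t => Sg (fun v => g ((1:Fin 3) :: v)) (i+1) t)).sum) := by
        rw [← Finset.sum_add_distrib]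
        exact Finset.sum_congr rfl hstep
      have hsum2 : (∑ i ∈ Finset.range (m+1), (if i = m then (0:M) else
                  ((allW2 (m-(i+1))).map (fun t => Sg (fun v => g ((0:Fin 3) :: v)) (i+1) t)).sum
                  + ((allW2 (m-(i+1))).map (fun t => Sg (fun v => g ((1:Fin 3) :: v)) (i+1) t)).sum))
          = (∑ i ∈ Finset.range m,
              ((allW2 (m-(i+1))).map (fun t => Sg (fun v => g ((0:Fin 3) :: v)) (i+1) t)).sum)
            + ∑ i ∈ Finset.range m,
              ((allW2 (m-(i+1))).map (fun t => Sg (fun v => g ((1:Fin 3) :: v)) (i+1) t)).sum := by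
        rw [Finset.sum_range_succ, if_pos rfl, add_zero, ← Finset.sum_add_distrib]
        refine Finset.sum_congr rfl (fun i hi => ?_)
        have : i ≠ m := by have := Finset.mem_range.1 hi; omega
        rw [if_neg this]
      have hF0 : ((allW2 (m+1-0)).map (fun s => Sg g 0 s)).sum
          = ((allW2 (m-0)).map (fun t => Sg (fun v => g ((0:Fin 3) :: v)) 0 t)).sum
            + ((allW2 (m-0)).map (fun t => Sg (fun v => g ((1:Fin 3) :: v)) 0 t)).sum := by
        rw [show m+1-0 = m+1 from rfl, show m-0 = m from rfl, allW2_succ_sum]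
        simp only [Sg_zero, List.map_cons, emb2_zero, emb2_one]
      conv_rhs => rw [Finset.sum_range_succ']
      rw [hsum1, hsum2, hF0]
      rw [Finset.sum_range_succ' (fun j =>
        ((allW2 (m-j)).map (fun t => Sg (fun v => g ((0:Fin 3) :: v)) j t)).sum) m]
      rw [Finset.sum_range_succ' (fun j =>
        ((allW2 (m-j)).map (fun t => Sg (fun v => g ((1:Fin 3) :: v)) j t)).sum) m]
      abel

end ShufSum

theorem pi3_emb2 : pi3 ∘ emb2 = id := by
  funext a
  fin_cases a <;> rfl

theorem pi3_two : pi3 2 = 0 := rfl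

theorem list_sum_smul_const {R M α : Type*} [Semiring R] [AddCommMonoid M] [Module R M]
    (l : List α) (c : α → R) (K : M) :
    (l.map fun v => c v • K).sum = ((l.map c).sum) • K := by
  induction l with
  | nil => simp
  | cons a l ih => simp [ih, add_smul]

theorem Sg_eval {k : Type*} [Field k] [CharZero k] (φ : NC k 2) (hφ : IsCommGroupLike φ)
    {S : Type*} [Ring S] [Algebra k S] (n : ℕ) (U V W : PowerSeries S)
    (hUW : U * W = W * U) (hVW : V * W = W * V) (j : ℕ) (s : Word 2) :
    Sg (fun v => φ (v.map pi3) • PowerSeries.coeff n (p3 U V W v)) j s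
      = if j = 0 then φ s • PowerSeries.coeff n (p2 U V s) else 0 := by
  have hval : ∀ v ∈ shuffle (List.replicate j (2:Fin 3)) (s.map emb2),
      p3 U V W v = W ^ j * p2 U V s := by
    intro v hv
    have hsep := shuffle_sep _ _ (fun x hx => List.eq_of_mem_replicate hx) v hv
    rw [p3_eq U V W hUW hVW v, hsep.1, hsep.2, stW_map_emb, cntW_map_emb,
      List.length_replicate, Nat.add_zero]
  have hcongr : (shuffle (List.replicate j (2:Fin 3)) (s.map emb2)).map
        (fun v => φ (v.map pi3) • PowerSeries.coeff n (p3 U V W v))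
      = (shuffle (List.replicate j (2:Fin 3)) (s.map emb2)).map
        (fun v => φ (v.map pi3) • PowerSeries.coeff n (W ^ j * p2 U V s)) := by
    refine List.map_congr_left (fun v hv => ?_)
    rw [hval v hv]
  have hmap : (shuffle (List.replicate j (2:Fin 3)) (s.map emb2)).map
        (fun v => φ (v.map pi3)) = (shuffle (List.replicate j (0:Fin 2)) s).map φ := by
    have h1 : (shuffle (List.replicate j (2:Fin 3)) (s.map emb2)).map (List.map pi3)
        = shuffle (List.replicate j (0:Fin 2)) s := by
      rw [shuffle_map, List.map_replicate, pi3_two, List.map_map, pi3_emb2, List.map_id]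
    rw [← h1, List.map_map]
    rfl
  have hscal : ((shuffle (List.replicate j (2:Fin 3)) (s.map emb2)).map
      (fun v => φ (v.map pi3))).sum = φ (List.replicate j 0) * φ s := by
    rw [hmap, ← hφ.1.2]
  rw [Sg, hcongr, list_sum_smul_const, hscal]
  cases j with
  | zero =>
      rw [if_pos rfl]
      simp [hφ.1.1]
  | succ p =>
      rw [if_neg (by omega)]
      rw [groupLike_replicate_eq_zero hφ.1 hφ.2.1 p, zero_mul, zero_smul]

theorem subst_add_left {k : Type*} [Field k] [CharZero k] (φ : NC k 2)
    (hφ : IsCommGroupLike φ) {S : Type*} [Ring S] [Algebra k S]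
    (U V W : PowerSeries S) (hUW : U * W = W * U) (hVW : V * W = W * V) :
    substPS φ (U + W) V = substPS φ U V := by
  ext n
  rw [substPS, substPS, PowerSeries.coeff_mk, PowerSeries.coeff_mk]
  refine Finset.sum_congr rfl (fun m _ => ?_)
  rw [sum_ofFn_allW2 m (fun w => φ w • PowerSeries.coeff n ((w.map ![U+W, V]).prod)),
    sum_ofFn_allW2 m (fun w => φ w • PowerSeries.coeff n ((w.map ![U, V]).prod))]
  have hL : ∀ w : Word 2, φ w • PowerSeries.coeff n ((w.map ![U+W, V]).prod)
      = ((fibL w).map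
          (fun v => φ (v.map pi3) • PowerSeries.coeff n (p3 U V W v))).sum := by
    intro w
    rw [← p2_prod, exp_fibL, map_list_sum (PowerSeries.coeff n), List.map_map,
      List.smul_sum, List.map_map]
    refine congrArg List.sum (List.map_congr_left (fun v hv => ?_))
    simp only [Function.comp_apply]
    rw [fibL_map_pi3 w v hv]
  simp only [hL]
  rw [fib_sum m (fun v => φ (v.map pi3) • PowerSeries.coeff n (p3 U V W v)),
    total_shuffle m (fun v => φ (v.map pi3) • PowerSeries.coeff n (p3 U V W v))]
  rw [Finset.sum_eq_single_of_mem 0 (Finset.mem_range.2 (by omega))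
    (fun j _ hj => by
      have : ∀ s : Word 2,
          Sg (fun v => φ (v.map pi3) • PowerSeries.coeff n (p3 U V W v)) j s = 0 := by
        intro s
        rw [Sg_eval φ hφ n U V W hUW hVW, if_neg hj]
      simp [this])]
  have hR : ∀ s : Word 2,
      Sg (fun v => φ (v.map pi3) • PowerSeries.coeff n (p3 U V W v)) 0 s
        = φ s • PowerSeries.coeff n ((s.map ![U, V]).prod) := by
    intro s
    rw [Sg_eval φ hφ n U V W hUW hVW, if_pos rfl, p2_prod]
  simp only [Nat.sub_zero, hR]

def tau : Fin 2 → Fin 2 := ![1, 0]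

theorem tau_tau : ∀ a, tau (tau a) = a := by decide

theorem substPS_swap {k : Type*} [CommRing k] {S : Type*} [Ring S] [Algebra k S]
    (φ : NC k 2) (P Q : PowerSeries S) :
    substPS φ P Q = substPS (fun w => φ (w.map tau)) Q P := by
  ext n
  rw [substPS, substPS, PowerSeries.coeff_mk, PowerSeries.coeff_mk]
  refine Finset.sum_congr rfl (fun m _ => ?_)
  refine Fintype.sum_equiv
    ⟨fun u => tau ∘ u, fun u => tau ∘ u,
      fun u => funext fun i => tau_tau (u i), fun u => funext fun i => tau_tau (u i)⟩
    _ _ (fun u => ?_)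
  simp only [Equiv.coe_fn_mk]
  rw [← List.map_ofFn, List.map_map, List.map_map,
    show tau ∘ tau = id from funext tau_tau, List.map_id,
    show ![Q, P] ∘ tau = ![P, Q] from by funext a; fin_cases a <;> rfl]

theorem isCGL_swap {k : Type*} [CommRing k] {φ : NC k 2} (hφ : IsCommGroupLike φ) :
    IsCommGroupLike (fun w => φ (w.map tau)) := by
  obtain ⟨⟨h1, h2⟩, h3, h4⟩ := hφ
  refine ⟨⟨by simpa using h1, fun u v => ?_⟩, ?_, ?_⟩
  · rw [show (fun w => φ (w.map tau)) = φ ∘ List.map tau from rfl, ← List.map_map,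
      shuffle_map]
    exact h2 _ _
  · exact h4
  · exact h3

end AuxStatement6

/-- For a commutator group-like `φ` and topologically nilpotent elements
`U, V, W` of a complete (filtered) `k`-algebra — modelled by power series with
vanishing constant term over an arbitrary `k`-algebra `S` — with `[U,W] = 0`
and `[V,W] = 0`, one has `φ(U+W, V) = φ(U, V+W) = φ(U,V)`. -/
theorem statement6 (k : Type*) [Field k] [CharZero k] (φ : NC k 2)
    (hφ : IsCommGroupLike φ) (S : Type*) [Ring S] [Algebra k S]
    (U V W : PowerSeries S)
    (hU : PowerSeries.constantCoeff U = 0) (hV : PowerSeries.constantCoeff V = 0)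
    (hW : PowerSeries.constantCoeff W = 0)
    (hUW : U * W = W * U) (hVW : V * W = W * V) :
    substPS φ (U + W) V = substPS φ U V ∧ substPS φ U (V + W) = substPS φ U V := by
  constructor
  · exact subst_add_left φ hφ U V W hUW hVW
  · have h1 := substPS_swap φ U (V + W)
    have h2 := subst_add_left (fun w => φ (w.map tau)) (isCGL_swap hφ) V U W hVW hUW
    have h3 := substPS_swap φ U V
    rw [h1, h2, ← h3]
end
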